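/- Let p be a prime with −1 a residue and 2, 3 non-residues mod p, and suppose A ⊔ B is a reduction of 𝒫_p splitting the Hamiltonian cycle (0,1,…,p−1,0) into segments whose shortest segment R_1 = (−⌊l/2⌋,…,⌊l/2⌋ or ⌊l/2⌋+1) has even length l with 2 ≤ l ≤ p/4. Then every element of the integer interval [l/2 + 1, 3l/2 + 1] is a quadratic non-residue mod p. -/

import Mathlib

open scoped Classical

/-- `a` is a (nonzero) quadratic residue in `ZMod p`. -/
def IsQR (p : ℕ) (a : ZMod p) : Prop := a ≠ 0 ∧ IsSquare a

/-- The Paley graph on `𝔽_p`: `a ~ b` iff `a - b` is a nonzero quadratic residue.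
(The adjacency is stated symmetrically; when `-1` is a residue this agrees with
the usual definition.) -/
def paley (p : ℕ) : SimpleGraph (ZMod p) where
  Adj a b := a ≠ b ∧ IsSquare (a - b) ∧ IsSquare (b - a)
  symm := ⟨by intro a b h; exact ⟨h.1.symm, h.2.2, h.2.1⟩⟩
  loopless := ⟨by intro a h; exact h.1 rfl⟩

/-- The list of vertices of the path `P_{a,b}` of the path system `𝒫_p`. -/
noncomputable def specList (p : ℕ) (a b : ZMod p) : List (ZMod p) :=
  if IsQR p (b - a) then [a, b]
  else if b - a = 3 then [a, a + 1, a + 2, b]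
  else [a, (a + b) * (2 : ZMod p)⁻¹, b]

theorem stmt_13 (p : ℕ) [Fact p.Prime]
    (h1 : IsQR p (-1)) (h2 : ¬ IsQR p 2) (h3 : ¬ IsQR p 3)
    (A B : Set (ZMod p))
    -- `A ⊔ B` is a reduction of `𝒫_p`:
    (hAne : A.Nonempty) (hBne : B.Nonempty)
    (hcover : ∀ v, v ∈ A ∨ v ∈ B) (hdisj : ∀ v, ¬ (v ∈ A ∧ v ∈ B))
    (hredA : ∀ u ∈ A, ∀ v ∈ A, u ≠ v → ∀ w ∈ specList p u v, w ∈ A)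
    (hredB : ∀ u ∈ B, ∀ v ∈ B, u ≠ v → ∀ w ∈ specList p u v, w ∈ B)
    -- the shortest segment has even length `l` with `2 ≤ l ≤ p/4`:
    (l : ℕ) (hEven : Even l) (hl2 : 2 ≤ l) (hl4 : 4 * l ≤ p)
    -- the shortest segment `R₁ = (-l/2, …, l/2)` lies in `A`:
    (hR1 : ∀ i : ℤ, -((l : ℤ) / 2) ≤ i → i ≤ (l : ℤ) / 2 → (i : ZMod p) ∈ A)
    -- the two adjacent segments have length at least `l` and lie in `B`:
    (hR2 : ∀ i : ℤ, (l : ℤ) / 2 + 1 ≤ i → i ≤ 3 * (l : ℤ) / 2 + 1 → (i : ZMod p) ∈ B)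
    (hR2k : ∀ i : ℤ, -(3 * (l : ℤ) / 2 + 1) ≤ i → i ≤ -((l : ℤ) / 2 + 1) →
      (i : ZMod p) ∈ B) :
    ∀ i : ℤ, (l : ℤ) / 2 + 1 ≤ i → i ≤ 3 * (l : ℤ) / 2 + 1 →
      ¬ IsQR p (i : ZMod p) := by
  intro i hi1 hi2 hqr
  obtain ⟨m, hm⟩ := hEven
  have hm' : (l : ℤ) = 2 * m := by exact_mod_cast (by omega : l = 2 * m)
  have hpl : 4 * (l : ℤ) < (p : ℤ) := by
    rcases lt_or_eq_of_le (by exact_mod_cast hl4 : 4 * (l : ℤ) ≤ p) with h | h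
    · exact h
    · exfalso
      have h2p : (2 : ℕ) ∣ p := by
        have : (2 : ℤ) ∣ (p : ℤ) := ⟨2 * l, by linarith⟩
        exact_mod_cast this
      have := (Nat.prime_dvd_prime_iff_eq Nat.prime_two (Fact.out)).mp h2p
      omega
  have hdiv : (l : ℤ) / 2 = m := by omega
  have hdiv3 : 3 * (l : ℤ) / 2 = 3 * m := by omega
  rw [hdiv] at hi1
  rw [hdiv3] at hi2
  have hm1 : 1 ≤ m := by omega
  set b : ZMod p := (i : ZMod p) with hb
  -- 2*i is not divisible by p, and 2*i - 3 is not divisible by p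
  have hnd1 : ¬ ((p : ℤ) ∣ 2 * i) := by
    intro h; have := Int.le_of_dvd (by omega) h; omega
  have hnd2 : ¬ ((p : ℤ) ∣ 2 * i - 3) := by
    intro h; have := Int.le_of_dvd (by omega) h; omega
  have hsub : b - (-b) = ((2 * i : ℤ) : ZMod p) := by push_cast [hb]; ring
  have hsubne : b - (-b) ≠ 0 := by
    rw [hsub]; rw [Ne, ZMod.intCast_zmod_eq_zero_iff_dvd]; exact_mod_cast hnd1
  have hne : (-b : ZMod p) ≠ b := fun h => hsubne (sub_eq_zero.mpr h.symm)
  -- b - (-b) = 2*b is not a QR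
  have hbne : b ≠ 0 := hqr.1
  have h2ne : (2 : ZMod p) ≠ 0 := by
    have : ((2 : ℤ) : ZMod p) ≠ 0 := by
      rw [Ne, ZMod.intCast_zmod_eq_zero_iff_dvd]
      intro h; have := Int.le_of_dvd (by norm_num) h; omega
    exact_mod_cast this
  have hnqr : ¬ IsQR p (b - (-b)) := by
    rintro ⟨hz, hs⟩
    apply h2
    refine ⟨h2ne, ?_⟩
    have h2b : b - (-b) = 2 * b := by ring
    have : IsSquare ((2 * b) * b⁻¹) := by
      rw [← h2b]; exact hs.mul hqr.2.inv
    rwa [mul_assoc, mul_inv_cancel₀ hbne, mul_one] at this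
  have hne3 : b - (-b) ≠ 3 := by
    rw [hsub]
    intro h
    have : ((2 * i - 3 : ℤ) : ZMod p) = 0 := by push_cast; rw [sub_eq_zero]; push_cast at h; exact h
    rw [ZMod.intCast_zmod_eq_zero_iff_dvd] at this
    exact hnd2 (by exact_mod_cast this)
  -- membership
  have h0A : (0 : ZMod p) ∈ A := by
    have := hR1 0 (by omega) (by omega)
    simpa using this
  have hbB : b ∈ B := by
    have := hR2 i (by omega) (by omega)
    exact this
  have hnbB : (-b : ZMod p) ∈ B := by
    have := hR2k (-i) (by omega) (by omega)
    push_cast at this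
    exact this
  have h0spec : (0 : ZMod p) ∈ specList p (-b) b := by
    unfold specList
    rw [if_neg hnqr, if_neg hne3]
    simp
  have h0B : (0 : ZMod p) ∈ B := hredB (-b) hnbB b hbB hne 0 h0spec
  exact hdisj 0 ⟨h0A, h0B⟩
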